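/- Let T_m, T_θ, K, D_g > 0 be constants, let ω_g, P_m, θ : ℝ → ℝ be differentiable functions satisfying T_m Ṗ_m(t) = −P_m(t) − K⁻¹ω_g(t) + θ(t) and T_θ θ̇(t) = −θ(t) + P_m(t) for all t, and let P̄_m = θ̄ ∈ ℝ be constants. Then, with Z₁(θ, P_m) = (T_θ K/2)(θ − θ̄)² + (T_m K/2)(P_m − P̄_m)², for all t: (−D_g ω_g(t)² + ω_g(t)(P_m(t) − P̄_m)) + d/dt Z₁(θ(t), P_m(t)) = −D_g ω_g(t)² − K(θ(t) − P_m(t))² ≤ 0. -/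

import Mathlib

/-- Passive interconnection of a generator bus and the first-order
turbine-governor with its controller:
`U̇_g + Ż₁ = −D_g ω_g² − K(θ − P_m)² ≤ 0`. -/
theorem first_order_passive_interconnection (Tm Tθ K Dg : ℝ)
    (hTm : 0 < Tm) (hTθ : 0 < Tθ) (hK : 0 < K) (hDg : 0 < Dg)
    (ωg Pm θ : ℝ → ℝ) (hωg : Differentiable ℝ ωg)
    -- T_m Ṗ_m = −P_m − K⁻¹ ω_g + θ :
    (hPm : ∀ t, HasDerivAt Pm ((-Pm t - K⁻¹ * ωg t + θ t) / Tm) t)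
    -- T_θ θ̇ = −θ + P_m :
    (hθ : ∀ t, HasDerivAt θ ((-θ t + Pm t) / Tθ) t)
    (Pmb θb : ℝ) (hs : Pmb = θb) :
    ∀ t, ((-Dg * (ωg t)^2 + ωg t * (Pm t - Pmb))
        + deriv (fun s => Tθ * K / 2 * (θ s - θb)^2
            + Tm * K / 2 * (Pm s - Pmb)^2) t
      = -Dg * (ωg t)^2 - K * (θ t - Pm t)^2)
    ∧ -Dg * (ωg t)^2 - K * (θ t - Pm t)^2 ≤ 0 := by
  intro t
  have h1 : HasDerivAt (fun s => Tθ * K / 2 * (θ s - θb)^2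
      + Tm * K / 2 * (Pm s - Pmb)^2)
      (Tθ * K / 2 * (2 * (θ t - θb) * ((-θ t + Pm t) / Tθ))
        + Tm * K / 2 * (2 * (Pm t - Pmb) * ((-Pm t - K⁻¹ * ωg t + θ t) / Tm))) t := by
    have := (((((hθ t).sub_const θb).pow 2).const_mul (Tθ * K / 2)).add
      ((((hPm t).sub_const Pmb).pow 2).const_mul (Tm * K / 2)))
    refine this.congr_deriv ?_
    norm_num
  constructor
  · rw [h1.deriv, hs]
    field_simp
    ring
  · have h2 : 0 ≤ Dg * (ωg t)^2 := by positivity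
    have h3 : 0 ≤ K * (θ t - Pm t)^2 := by positivity
    linarith
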